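/- In D = ℚ[x², x³] with τ defined by equality of degree, the polynomial f(x) = x⁸ − x⁹ has, up to associates and rearrangement, exactly one τ-atomic factorization, namely f(x) = (x² − x³)·x³·x³. -/

import Mathlib

/-- `a` is a nonzero nonunit, i.e. an element of `D^#`. -/
def NzNonunit {D : Type*} [CommRing D] (a : D) : Prop := a ≠ 0 ∧ ¬ IsUnit a

/-- `l` is the list of factors of a `τ`-factorization of `a`:
`a = λ * l.prod` for a unit `λ`, the factors are nonzero nonunits and pairwise `τ`-related. -/
def TauFact {D : Type*} [CommRing D] (τ : D → D → Prop) (l : List D) (a : D) : Prop :=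
  l ≠ [] ∧ (∀ b ∈ l, NzNonunit b) ∧ l.Pairwise τ ∧ ∃ u : Dˣ, a = (u : D) * l.prod

/-- `b` τ-divides `a`: `b` occurs as a factor in some τ-factorization of `a`. -/
def TauDvd {D : Type*} [CommRing D] (τ : D → D → Prop) (b a : D) : Prop :=
  ∃ l, TauFact τ l a ∧ b ∈ l

/-- `a` is τ-irreducible (a τ-atom): all its τ-factorizations are trivial. -/
def TauIrred {D : Type*} [CommRing D] (τ : D → D → Prop) (a : D) : Prop :=
  NzNonunit a ∧ ∀ l, TauFact τ l a → l.length = 1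

/-- `l` is a τ-atomic factorization of `a`. -/
def TauAtomicFact {D : Type*} [CommRing D] (τ : D → D → Prop) (l : List D) (a : D) : Prop :=
  TauFact τ l a ∧ ∀ b ∈ l, TauIrred τ b

/-- `D` is τ-atomic: every nonzero nonunit has a τ-atomic factorization. -/
def TauAtomic {D : Type*} [CommRing D] (τ : D → D → Prop) : Prop :=
  ∀ a : D, NzNonunit a → ∃ l, TauAtomicFact τ l a

def TauSymm {D : Type*} [CommRing D] (τ : D → D → Prop) : Prop :=
  ∀ a b, τ a b → τ b a

/-- τ is associate preserving. -/
def TauAssocPres {D : Type*} [CommRing D] (τ : D → D → Prop) : Prop :=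
  ∀ a b b' : D, τ a b → Associated b b' → τ a b'

/-- τ is refinable: replacing each factor of a τ-factorization by a
τ-factorization of it again yields a τ-factorization. -/
def TauRefinable {D : Type*} [CommRing D] (τ : D → D → Prop) : Prop :=
  ∀ (a : D) (l : List D) (F : List (List D)),
    TauFact τ l a → List.Forall₂ (fun b m => TauFact τ m b) l F →
    TauFact τ F.flatten a

/-- `a` is a vertex of the τ-irreducible divisor graph `G_τ(x)`. -/
def GVert {D : Type*} [CommRing D] (τ : D → D → Prop) (x a : D) : Prop :=
  TauIrred τ a ∧ TauDvd τ a x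

/-- `a` and `b` are adjacent (distinct, i.e. non-associated, vertices joined by an edge)
in `G_τ(x)`: some τ-factorization of `x` contains associates of both. -/
def GAdj {D : Type*} [CommRing D] (τ : D → D → Prop) (x a b : D) : Prop :=
  GVert τ x a ∧ GVert τ x b ∧ ¬ Associated a b ∧
  ∃ l, TauFact τ l x ∧ (∃ a' ∈ l, Associated a a') ∧ (∃ b' ∈ l, Associated b b')

/-- `G_τ(x)` is connected (vertices are taken up to associates). -/
def GConnected {D : Type*} [CommRing D] (τ : D → D → Prop) (x : D) : Prop :=
  ∀ a b, GVert τ x a → GVert τ x b →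
    Relation.ReflTransGen (fun u v => GAdj τ x u v ∨ Associated u v) a b

/-- The reduced graph `G̅_τ(x)` (loops deleted) is connected; loops do not affect
connectivity, so this is connectivity with respect to the same adjacency relation. -/
def GBarConnected {D : Type*} [CommRing D] (τ : D → D → Prop) (x : D) : Prop :=
  ∀ a b, GVert τ x a → GVert τ x b →
    Relation.ReflTransGen (fun u v => GAdj τ x u v ∨ Associated u v) a b

/-- `G_τ(x)` is a pseudoclique: any two non-associated vertices are adjacent.
(Equivalently, the reduced graph `G̅_τ(x)` is a clique / complete graph.) -/
def GPseudoclique {D : Type*} [CommRing D] (τ : D → D → Prop) (x : D) : Prop :=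
  ∀ a b, GVert τ x a → GVert τ x b → ¬ Associated a b → GAdj τ x a b

/-- `Diam(G_τ(x)) ≤ 1`: any two vertices are equal (associated) or adjacent. -/
def GDiamLeOne {D : Type*} [CommRing D] (τ : D → D → Prop) (x : D) : Prop :=
  ∀ a b, GVert τ x a → GVert τ x b → Associated a b ∨ GAdj τ x a b

/-- `G_τ(x)` has finitely many vertices (up to associates). -/
def GVertFinite {D : Type*} [CommRing D] (τ : D → D → Prop) (x : D) : Prop :=
  ∃ s : Finset D, ∀ a, GVert τ x a → ∃ c ∈ s, Associated a c

/-- The vertex `a` of `G_τ(x)` has finite degree: finitely many adjacent vertices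
up to associates (loops not counted). -/
def GDegFinite {D : Type*} [CommRing D] (τ : D → D → Prop) (x a : D) : Prop :=
  ∃ s : Finset D, ∀ b, GAdj τ x a b → ∃ c ∈ s, Associated b c

/-- The vertex `a` of `G_τ(x)` carries finitely many loops: there is a uniform bound on
the number of occurrences of associates of `a` in τ-atomic factorizations of `x`. -/
def GLoopsFinite {D : Type*} [CommRing D] (τ : D → D → Prop) (x a : D) : Prop :=
  ∃ N : ℕ, ∀ l m : List D, TauAtomicFact τ l x → m.Sublist l →
    (∀ b ∈ m, Associated a b) → m.length ≤ N

/-- `D` satisfies τ-ACCP. -/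
def TauACCP {D : Type*} [CommRing D] (τ : D → D → Prop) : Prop :=
  ∀ a : ℕ → D, (∀ i, TauDvd τ (a (i + 1)) (a i)) →
    ∃ N, ∀ i, N ≤ i → Associated (a i) (a N)

/-- `D` is a τ-UFD. -/
def TauUFD {D : Type*} [CommRing D] (τ : D → D → Prop) : Prop :=
  TauAtomic τ ∧ ∀ (x : D) (l₁ l₂ : List D), TauAtomicFact τ l₁ x → TauAtomicFact τ l₂ x →
    Multiset.Rel Associated (l₁ : Multiset D) (l₂ : Multiset D)

/-- `D` is a τ-FFD: each nonzero nonunit has only finitely many τ-factorizations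
up to rearrangement and associates. -/
def TauFFD {D : Type*} [CommRing D] (τ : D → D → Prop) : Prop :=
  ∀ x : D, NzNonunit x → ∃ S : Finset (Multiset D),
    ∀ l : List D, TauFact τ l x → ∃ m ∈ S, Multiset.Rel Associated (l : Multiset D) m

/-- `D` is a τ-WFFD: each nonzero nonunit has finitely many τ-divisors up to associates. -/
def TauWFFD {D : Type*} [CommRing D] (τ : D → D → Prop) : Prop :=
  ∀ x : D, NzNonunit x → ∃ s : Finset D,
    ∀ b, TauDvd τ b x → ∃ c ∈ s, Associated b c

/-- `D` is a τ-idf domain: each nonzero nonunit has finitely many τ-irreducible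
τ-divisors up to associates. -/
def TauIdf {D : Type*} [CommRing D] (τ : D → D → Prop) : Prop :=
  ∀ x : D, NzNonunit x → ∃ s : Finset D,
    ∀ b, TauIrred τ b → TauDvd τ b x → ∃ c ∈ s, Associated b c



open Polynomial

/-- `D = QQ[x^2,x^3]`, the subring of `QQ[X]` generated by `X^2` and `X^3`. -/
noncomputable abbrev Qx2x3 : Subalgebra ℚ (Polynomial ℚ) :=
  Algebra.adjoin ℚ ({X ^ 2, X ^ 3} : Set (Polynomial ℚ))

/-- The degree relation: `g τ g'` iff `deg g = deg g'`. -/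
def degRel (g g' : Qx2x3) : Prop := (g : Polynomial ℚ).natDegree = (g' : Polynomial ℚ).natDegree

lemma C_mem (c : ℚ) : (C c : Polynomial ℚ) ∈ Qx2x3 := by
  rw [← Polynomial.algebraMap_eq]; exact Subalgebra.algebraMap_mem _ c

noncomputable def constUnit (c : ℚ) (hc : c ≠ 0) : Qx2x3ˣ where
  val := ⟨C c, C_mem c⟩
  inv := ⟨C c⁻¹, C_mem c⁻¹⟩
  val_inv := by ext; push_cast; rw [← C_mul, mul_inv_cancel₀ hc, C_1]
  inv_val := by ext; push_cast; rw [← C_mul, inv_mul_cancel₀ hc, C_1]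

@[simp] lemma constUnit_coe (c : ℚ) (hc : c ≠ 0) :
    ((constUnit c hc : Qx2x3) : Polynomial ℚ) = C c := rfl

lemma assoc_of_eq_C_mul {b b' : Qx2x3} {c : ℚ} (hc : c ≠ 0)
    (h : (b : Polynomial ℚ) = C c * (b' : Polynomial ℚ)) : Associated b' b :=
  ⟨constUnit c hc, Subtype.ext (by push_cast [constUnit_coe]; rw [h]; ring)⟩

lemma isUnit_coe {a : Qx2x3} (h : IsUnit a) : IsUnit (a : Polynomial ℚ) :=
  h.map Qx2x3.val

/-- subalgebra of polys with zero linear coefficient -/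

noncomputable def lowSub : Subalgebra ℚ (Polynomial ℚ) where
  carrier := {p | p.coeff 1 = 0}
  mul_mem' := by
    intro p q hp hq
    simp only [Set.mem_setOf_eq] at *
    rw [coeff_mul]
    have : Finset.HasAntidiagonal.antidiagonal (1:ℕ) = {(0,1),(1,0)} := by decide
    rw [this]
    simp [hp, hq]
  add_mem' := by intro p q hp hq; simp_all [Set.mem_setOf_eq, coeff_add]
  one_mem' := by simp [Set.mem_setOf_eq, coeff_one]
  zero_mem' := by simp [Set.mem_setOf_eq]
  algebraMap_mem' := fun r => by
    simp [Set.mem_setOf_eq, Polynomial.algebraMap_eq, coeff_C]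

lemma coeff_one_of_mem {p : Polynomial ℚ} (hp : p ∈ Qx2x3) : p.coeff 1 = 0 := by
  have h : Qx2x3 ≤ lowSub := Algebra.adjoin_le (by
    rintro x (rfl | rfl) <;> show Polynomial.coeff _ 1 = 0 <;> simp [coeff_X_pow])
  exact h hp

lemma coe_ne_zero {a : Qx2x3} (h : a ≠ 0) : (a : Polynomial ℚ) ≠ 0 :=
  fun h0 => h (Subtype.ext h0)

lemma two_le_natDegree {a : Qx2x3} (h : NzNonunit a) : 2 ≤ (a : Polynomial ℚ).natDegree := by
  obtain ⟨h0, hu⟩ := h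
  have ha0 : (a : Polynomial ℚ) ≠ 0 := coe_ne_zero h0
  by_contra hlt
  push_neg at hlt
  interval_cases hd : (a : Polynomial ℚ).natDegree
  · have hc : (a : Polynomial ℚ) = C ((a : Polynomial ℚ).coeff 0) := eq_C_of_natDegree_eq_zero hd
    have hcn : (a : Polynomial ℚ).coeff 0 ≠ 0 := fun hh => ha0 (by rw [hc, hh, C_0])
    exact hu ⟨constUnit _ hcn, Subtype.ext (by push_cast [constUnit_coe]; exact hc.symm)⟩
  · have h1 : (a : Polynomial ℚ).coeff 1 = 0 := coeff_one_of_mem a.2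
    have hlc : (a : Polynomial ℚ).leadingCoeff ≠ 0 := leadingCoeff_ne_zero.2 ha0
    rw [leadingCoeff, hd, h1] at hlc
    exact hlc rfl

lemma coe_list_prod (l : List Qx2x3) :
    ((l.prod : Qx2x3) : Polynomial ℚ) = (l.map (fun b : Qx2x3 => (b : Polynomial ℚ))).prod := by
  induction l with
  | nil => simp
  | cons h t ih => push_cast [List.prod_cons, ih]; rfl

lemma natDegree_list_prod_of_ne_zero {L : List (Polynomial ℚ)} (h : ∀ p ∈ L, p ≠ 0) :
    L.prod.natDegree = (L.map natDegree).sum := by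
  have h0 : (0 : Polynomial ℚ) ∉ (L : Multiset (Polynomial ℚ)) := by
    simpa using fun hp => (h 0 hp) rfl
  simpa [Multiset.map_coe, Multiset.prod_coe, Multiset.sum_coe] using
    natDegree_multiset_prod (L : Multiset (Polynomial ℚ)) h0

lemma tauFact_degree {l : List Qx2x3} {x : Qx2x3} (h : TauFact degRel l x) :
    ∃ d, 2 ≤ d ∧ (∀ b ∈ l, (b : Polynomial ℚ).natDegree = d) ∧
      (x : Polynomial ℚ).natDegree = l.length * d := by
  obtain ⟨hne, hnz, hpw, u, hu⟩ := h
  obtain ⟨b, t, rfl⟩ := List.exists_cons_of_ne_nil hne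
  have hall : ∀ c ∈ b :: t, (c : Polynomial ℚ).natDegree = (b : Polynomial ℚ).natDegree := by
    intro c hc
    rcases List.mem_cons.1 hc with rfl | hc
    · rfl
    · exact ((List.pairwise_cons.1 hpw).1 c hc).symm
  refine ⟨(b : Polynomial ℚ).natDegree, two_le_natDegree (hnz b (by simp)), hall, ?_⟩
  have hunit : IsUnit ((u : Qx2x3) : Polynomial ℚ) := isUnit_coe u.isUnit
  have hmemnz : ∀ p ∈ (b :: t).map (fun c : Qx2x3 => (c : Polynomial ℚ)), p ≠ 0 := by
    intro p hp
    obtain ⟨c, hc, rfl⟩ := List.mem_map.1 hp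
    exact coe_ne_zero (hnz c hc).1
  have hprod : ((((b :: t).prod : Qx2x3)) : Polynomial ℚ).natDegree
      = (((b :: t).map (fun c : Qx2x3 => (c : Polynomial ℚ))).map natDegree).sum := by
    rw [coe_list_prod, natDegree_list_prod_of_ne_zero hmemnz]
  have hP : (((b :: t).prod : Qx2x3) : Polynomial ℚ) ≠ 0 := by
    rw [coe_list_prod]
    exact List.prod_ne_zero (fun h0 => hmemnz 0 h0 rfl)
  rw [hu, MulMemClass.coe_mul]
  rw [natDegree_mul hunit.ne_zero hP, natDegree_eq_zero_of_isUnit hunit, zero_add, hprod,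
    List.sum_eq_card_nsmul _ ((b : Polynomial ℚ).natDegree) (by
      intro n hn
      obtain ⟨p, hp, rfl⟩ := List.mem_map.1 hn
      obtain ⟨c, hc, rfl⟩ := List.mem_map.1 hp
      exact hall c hc), List.length_map, List.length_map, smul_eq_mul]

lemma tauIrred_of_natDegree_three {a : Qx2x3} (h0 : NzNonunit a)
    (h3 : (a : Polynomial ℚ).natDegree = 3) : TauIrred degRel a := by
  refine ⟨h0, fun l hl => ?_⟩
  obtain ⟨d, hd2, _, hlen⟩ := tauFact_degree hl
  have hne : l.length ≠ 0 := by
    simpa [List.length_eq_zero_iff] using hl.1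
  rw [h3] at hlen
  by_contra hn1
  have : 2 * 2 ≤ l.length * d := Nat.mul_le_mul (by omega) hd2
  omega

lemma d9 : ((X:Polynomial ℚ)^8 - X^9).natDegree = 9 := by compute_degree!

lemma dX2X3 : ((X:Polynomial ℚ)^2 - X^3).natDegree = 3 := by compute_degree!

lemma dX3 : ((X:Polynomial ℚ)^3).natDegree = 3 := by compute_degree!

lemma F_ne_zero : ((X:Polynomial ℚ)^8 - X^9) ≠ 0 := fun h => by have := d9; simp [h] at this

lemma rm0F : rootMultiplicity 0 ((X:Polynomial ℚ)^8 - X^9) = 8 := by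
  have hfac : ((X:Polynomial ℚ)^8 - X^9) = (X - C 0)^8 * (1 - X) := by simp; ring
  rw [hfac, rootMultiplicity_mul (hfac ▸ F_ne_zero), rootMultiplicity_X_sub_C_pow,
    rootMultiplicity_eq_zero (by simp [IsRoot])]

lemma rm1F : rootMultiplicity 1 ((X:Polynomial ℚ)^8 - X^9) = 1 := by
  have hfac : ((X:Polynomial ℚ)^8 - X^9) = (C (-1) * X^8) * (X - C 1) := by simp; ring
  rw [hfac, rootMultiplicity_mul (hfac ▸ F_ne_zero),
    rootMultiplicity_eq_zero (by simp [IsRoot]), rootMultiplicity_X_sub_C_self]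

lemma eq_C_mul_of_dvd {b m : Polynomial ℚ} (hb0 : b ≠ 0) (hm : m ≠ 0)
    (hdeg : b.natDegree = m.natDegree) (hdvd : m ∣ b) :
    ∃ c : ℚ, c ≠ 0 ∧ b = C c * m := by
  obtain ⟨q, hq⟩ := hdvd
  have hq0 : q ≠ 0 := fun h => hb0 (by rw [hq, h, mul_zero])
  have hd : b.natDegree = m.natDegree + q.natDegree := by rw [hq, natDegree_mul hm hq0]
  obtain ⟨c, hc⟩ := natDegree_eq_zero.1 (by omega : q.natDegree = 0)
  exact ⟨c, fun h => hq0 (by rw [← hc, h, C_0]), by rw [hq, ← hc, mul_comm]⟩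

lemma key_cubic {G : Polynomial ℚ} (hG0 : G ≠ 0) (hG3 : G.natDegree = 3) :
    rootMultiplicity 0 G + rootMultiplicity 1 G ≤ 3 ∧
    (rootMultiplicity 0 G + rootMultiplicity 1 G = 3 →
      ∃ c : ℚ, c ≠ 0 ∧
        G = C c * ((X:Polynomial ℚ)^(rootMultiplicity 0 G) * (X-1)^(rootMultiplicity 1 G))) := by
  set e := rootMultiplicity 0 G
  set f := rootMultiplicity 1 G
  have hcop : IsCoprime ((X - C (0:ℚ))^e) ((X - C (1:ℚ))^f) :=
    (isCoprime_X_sub_C_of_isUnit_sub (by norm_num)).pow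
  have hdvd : (X - C (0:ℚ))^e * (X - C 1)^f ∣ G :=
    hcop.mul_dvd (pow_rootMultiplicity_dvd G 0) (pow_rootMultiplicity_dvd G 1)
  have hm0 : ((X:Polynomial ℚ) - C 0)^e * (X - C 1)^f ≠ 0 :=
    mul_ne_zero (pow_ne_zero _ (X_sub_C_ne_zero 0)) (pow_ne_zero _ (X_sub_C_ne_zero 1))
  have hmd : (((X:Polynomial ℚ) - C 0)^e * (X - C 1)^f).natDegree = e + f := by
    rw [natDegree_mul (pow_ne_zero _ (X_sub_C_ne_zero 0)) (pow_ne_zero _ (X_sub_C_ne_zero 1)),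
      natDegree_pow, natDegree_pow, natDegree_X_sub_C, natDegree_X_sub_C, mul_one, mul_one]
  constructor
  · have := natDegree_le_of_dvd hdvd hG0
    rw [hmd, hG3] at this
    exact this
  · intro hef
    obtain ⟨c, hc, hGc⟩ := eq_C_mul_of_dvd hG0 hm0 (by rw [hmd, hG3, hef]) hdvd
    refine ⟨c, hc, ?_⟩
    rw [hGc]
    simp only [C_0, sub_zero, C_1]

lemma rel_helper {x y z a g : Qx2x3} (hx : Associated x a) (hy : Associated y g)
    (hz : Associated z g) :
    Multiset.Rel Associated (x ::ₘ y ::ₘ z ::ₘ 0) (a ::ₘ g ::ₘ g ::ₘ 0) :=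
  Multiset.Rel.cons hx (Multiset.Rel.cons hy (Multiset.Rel.cons hz Multiset.Rel.zero))

theorem stmt3 (f a g : Qx2x3) (hf : (f : Polynomial ℚ) = X ^ 8 - X ^ 9)
    (ha : (a : Polynomial ℚ) = X ^ 2 - X ^ 3) (hg : (g : Polynomial ℚ) = X ^ 3) :
    TauAtomicFact degRel [a, g, g] f ∧
    ∀ l, TauAtomicFact degRel l f →
      Multiset.Rel Associated (l : Multiset Qx2x3) ([a, g, g] : Multiset Qx2x3) := by
  have daa : (a : Polynomial ℚ).natDegree = 3 := by rw [ha]; exact dX2X3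
  have dgg : (g : Polynomial ℚ).natDegree = 3 := by rw [hg]; exact dX3
  have dff : (f : Polynomial ℚ).natDegree = 9 := by rw [hf]; exact d9
  have hna : NzNonunit a :=
    ⟨fun h => by simp [h] at daa, fun h => by
      rw [natDegree_eq_zero_of_isUnit (isUnit_coe h)] at daa; exact absurd daa (by norm_num)⟩
  have hng : NzNonunit g :=
    ⟨fun h => by simp [h] at dgg, fun h => by
      rw [natDegree_eq_zero_of_isUnit (isUnit_coe h)] at dgg; exact absurd dgg (by norm_num)⟩
  have hirra : TauIrred degRel a := tauIrred_of_natDegree_three hna daa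
  have hirrg : TauIrred degRel g := tauIrred_of_natDegree_three hng dgg
  have hfeq : f = a * g * g := Subtype.ext (by push_cast; rw [hf, ha, hg]; ring)
  have hfact : ∀ (x : Qx2x3) (u : Qx2x3ˣ), x = (u : Qx2x3) * f → TauFact degRel [a, g, g] x := by
    intro x u hx
    refine ⟨by simp, ?_, ?_, u, ?_⟩
    · intro b hb
      rcases List.mem_cons.1 hb with rfl | hb
      · exact hna
      · rcases List.mem_cons.1 hb with rfl | hb
        · exact hng
        · rcases List.mem_cons.1 hb with rfl | hb
          · exact hng
          · simp at hb
    · simp [List.pairwise_cons, degRel, daa, dgg]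
    · rw [hx, hfeq]
      simp [List.prod_cons]
      ring
  constructor
  · exact ⟨hfact f 1 (by rw [Units.val_one, one_mul]), fun b hb => by
      rcases List.mem_cons.1 hb with rfl | hb
      · exact hirra
      · rcases List.mem_cons.1 hb with rfl | hb
        · exact hirrg
        · rcases List.mem_cons.1 hb with rfl | hb
          · exact hirrg
          · simp at hb⟩
  · rintro l ⟨hlf, hlirr⟩
    obtain ⟨d, hd2, hdl, hlen⟩ := tauFact_degree hlf
    rw [dff] at hlen
    have hne : l.length ≠ 0 := by simpa [List.length_eq_zero_iff] using hlf.1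
    have h4 : l.length ≤ 4 := by
      by_contra hgt
      push_neg at hgt
      have : 5 * 2 ≤ l.length * d := Nat.mul_le_mul (by omega) hd2
      omega
    have hcase : l.length = 1 ∨ (l.length = 3 ∧ d = 3) := by
      interval_cases h : l.length <;> omega
    rcases hcase with h1 | ⟨h3, hd3⟩
    · -- length 1: the single factor is not τ-irreducible, contradiction
      obtain ⟨b, rfl⟩ := List.length_eq_one_iff.1 h1
      obtain ⟨_, _, _, u, hu⟩ := hlf
      have hb : b = (↑u⁻¹ : Qx2x3) * f := by
        rw [hu, List.prod_singleton, Units.inv_mul_cancel_left]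
      have := (hlirr b (by simp)).2 [a, g, g] (hfact b u⁻¹ hb)
      simp at this
    · -- length 3, degree 3 each
      obtain ⟨g1, g2, g3, rfl⟩ := List.length_eq_three.1 h3
      have hdg1 : (g1 : Polynomial ℚ).natDegree = 3 := by rw [hdl g1 (by simp), hd3]
      have hdg2 : (g2 : Polynomial ℚ).natDegree = 3 := by rw [hdl g2 (by simp), hd3]
      have hdg3 : (g3 : Polynomial ℚ).natDegree = 3 := by rw [hdl g3 (by simp), hd3]
      obtain ⟨_, hnzl, _, u, hu⟩ := hlf
      have hg1n : (g1 : Polynomial ℚ) ≠ 0 := coe_ne_zero (hnzl g1 (by simp)).1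
      have hg2n : (g2 : Polynomial ℚ) ≠ 0 := coe_ne_zero (hnzl g2 (by simp)).1
      have hg3n : (g3 : Polynomial ℚ) ≠ 0 := coe_ne_zero (hnzl g3 (by simp)).1
      have hu' : f = (u : Qx2x3) * (g1 * (g2 * g3)) := by
        rw [hu]; simp [List.prod_cons]
      have hueq : (X ^ 8 - X ^ 9 : Polynomial ℚ)
          = ((u : Qx2x3) : Polynomial ℚ) * ((g1 : Polynomial ℚ) * ((g2 : Polynomial ℚ) * (g3 : Polynomial ℚ))) := by
        rw [← hf]
        exact_mod_cast congrArg (fun y : Qx2x3 => (y : Polynomial ℚ)) hu'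
      have hU : IsUnit ((u : Qx2x3) : Polynomial ℚ) := isUnit_coe u.isUnit
      obtain ⟨r, hr, hrC⟩ := Polynomial.isUnit_iff.1 hU
      have hUrm : ∀ z : ℚ, rootMultiplicity z ((u : Qx2x3) : Polynomial ℚ) = 0 := by
        intro z
        exact rootMultiplicity_eq_zero (by rw [← hrC]; simp [IsRoot, hr.ne_zero])
      have h23 : (g2 : Polynomial ℚ) * (g3 : Polynomial ℚ) ≠ 0 := mul_ne_zero hg2n hg3n
      have h123 : (g1 : Polynomial ℚ) * ((g2 : Polynomial ℚ) * (g3 : Polynomial ℚ)) ≠ 0 :=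
        mul_ne_zero hg1n h23
      have hall : ((u : Qx2x3) : Polynomial ℚ) * ((g1 : Polynomial ℚ) * ((g2 : Polynomial ℚ) * (g3 : Polynomial ℚ))) ≠ 0 :=
        mul_ne_zero hU.ne_zero h123
      have hrm : ∀ z : ℚ, rootMultiplicity z ((X:Polynomial ℚ)^8 - X^9)
          = rootMultiplicity z (g1 : Polynomial ℚ) + rootMultiplicity z (g2 : Polynomial ℚ)
            + rootMultiplicity z (g3 : Polynomial ℚ) := by
        intro z
        rw [hueq, rootMultiplicity_mul hall, rootMultiplicity_mul h123,
          rootMultiplicity_mul h23, hUrm]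
        ring
      have he := hrm 0
      have hfe := hrm 1
      rw [rm0F] at he
      rw [rm1F] at hfe
      have k1 := key_cubic hg1n hdg1
      have k2 := key_cubic hg2n hdg2
      have k3 := key_cubic hg3n hdg3
      -- abbreviations
      set e1 := rootMultiplicity 0 (g1 : Polynomial ℚ) with he1
      set e2 := rootMultiplicity 0 (g2 : Polynomial ℚ) with he2
      set e3 := rootMultiplicity 0 (g3 : Polynomial ℚ) with he3
      set f1 := rootMultiplicity 1 (g1 : Polynomial ℚ) with hf1
      set f2 := rootMultiplicity 1 (g2 : Polynomial ℚ) with hf2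
      set f3 := rootMultiplicity 1 (g3 : Polynomial ℚ) with hf3
      have assoc_g : ∀ b : Qx2x3, (b : Polynomial ℚ) ≠ 0 →
          rootMultiplicity 0 (b : Polynomial ℚ) = 3 → rootMultiplicity 1 (b : Polynomial ℚ) = 0 →
          (b : Polynomial ℚ).natDegree = 3 → Associated b g := by
        intro b hb0 hbe hbf hb3
        obtain ⟨c, hc, hbc⟩ := (key_cubic hb0 hb3).2 (by omega)
        rw [hbe, hbf] at hbc
        refine (assoc_of_eq_C_mul hc ?_).symm
        rw [hbc, hg]; ring
      have assoc_a : ∀ b : Qx2x3, (b : Polynomial ℚ) ≠ 0 →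
          rootMultiplicity 0 (b : Polynomial ℚ) = 2 → rootMultiplicity 1 (b : Polynomial ℚ) = 1 →
          (b : Polynomial ℚ).natDegree = 3 → Associated b a := by
        intro b hb0 hbe hbf hb3
        obtain ⟨c, hc, hbc⟩ := (key_cubic hb0 hb3).2 (by omega)
        rw [hbe, hbf] at hbc
        refine (assoc_of_eq_C_mul (c := -c) (neg_ne_zero.2 hc) ?_).symm
        rw [hbc, ha, map_neg]; ring
      have hsplit : (f1 = 1 ∧ f2 = 0 ∧ f3 = 0 ∧ e1 = 2 ∧ e2 = 3 ∧ e3 = 3) ∨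
          (f1 = 0 ∧ f2 = 1 ∧ f3 = 0 ∧ e1 = 3 ∧ e2 = 2 ∧ e3 = 3) ∨
          (f1 = 0 ∧ f2 = 0 ∧ f3 = 1 ∧ e1 = 3 ∧ e2 = 3 ∧ e3 = 2) := by omega
      show Multiset.Rel Associated (g1 ::ₘ g2 ::ₘ g3 ::ₘ 0) (a ::ₘ g ::ₘ g ::ₘ 0)
      rcases hsplit with ⟨q1, q2, q3, p1, p2, p3⟩ | ⟨q1, q2, q3, p1, p2, p3⟩ | ⟨q1, q2, q3, p1, p2, p3⟩
      · exact rel_helper (assoc_a g1 hg1n p1 q1 hdg1) (assoc_g g2 hg2n p2 q2 hdg2)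
          (assoc_g g3 hg3n p3 q3 hdg3)
      · rw [Multiset.cons_swap]
        exact rel_helper (assoc_a g2 hg2n p2 q2 hdg2) (assoc_g g1 hg1n p1 q1 hdg1)
          (assoc_g g3 hg3n p3 q3 hdg3)
      · rw [show (g1 ::ₘ g2 ::ₘ g3 ::ₘ 0 : Multiset Qx2x3) = g3 ::ₘ g1 ::ₘ g2 ::ₘ 0 by
          rw [Multiset.cons_swap g2 g3, Multiset.cons_swap g1 g3]]
        exact rel_helper (assoc_a g3 hg3n p3 q3 hdg3) (assoc_g g1 hg1n p1 q1 hdg1)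
          (assoc_g g2 hg2n p2 q2 hdg2)
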